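/- Let β ≥ 0, let x be a point of the Euclidean plane, and let W be a set of points contained in the closed disc of radius β + 1 centred at x such that every point w ∈ W has at most 4 points of W \ {w} within (closed) distance 1 of it. Then W is finite and card W ≤ 20(β + 2)². -/

import Mathlib

open Metric Set MeasureTheory ENNReal
open scoped Classical
open Real (pi)
local notation "π" => Real.pi

private lemma mult_bound (W : Set (EuclideanSpace ℝ (Fin 2)))
    (h : ∀ w ∈ W, ((W \ {w}) ∩ closedBall w 1).encard ≤ (4 : ℕ∞))
    (s : Finset (EuclideanSpace ℝ (Fin 2))) (hs : ↑s ⊆ W)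
    (y : EuclideanSpace ℝ (Fin 2)) :
    (s.filter (fun w => y ∈ closedBall w (1/2))).card ≤ 5 := by
  by_contra hc
  push_neg at hc
  set t := s.filter (fun w => y ∈ closedBall w (1/2)) with ht
  obtain ⟨w0, hw0⟩ : t.Nonempty := Finset.card_pos.mp (by omega)
  have hw0W : w0 ∈ W := hs (Finset.mem_filter.mp hw0).1
  have hy0 : dist y w0 ≤ 1/2 := (Finset.mem_filter.mp hw0).2
  have hsub : (↑(t.erase w0) : Set _) ⊆ (W \ {w0}) ∩ closedBall w0 1 := by
    intro w hw
    simp only [Finset.coe_erase, Set.mem_diff, Set.mem_singleton_iff, Finset.mem_coe] at hw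
    obtain ⟨hwt, hwne⟩ := hw
    have hwt' := Finset.mem_filter.mp hwt
    refine ⟨⟨hs hwt'.1, hwne⟩, ?_⟩
    have : dist y w ≤ 1/2 := hwt'.2
    have : dist w w0 ≤ dist w y + dist y w0 := dist_triangle _ _ _
    rw [mem_closedBall]
    rw [dist_comm] at hy0
    linarith [dist_comm w y ▸ ‹dist y w ≤ 1/2›, dist_comm y w0 ▸ hy0]
  have h5 : (5 : ℕ∞) ≤ ((W \ {w0}) ∩ closedBall w0 1).encard := by
    calc (5 : ℕ∞) ≤ ((t.erase w0).card : ℕ∞) := by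
          have hce : (t.erase w0).card = t.card - 1 := Finset.card_erase_of_mem hw0
          have : 5 ≤ (t.erase w0).card := by omega
          exact_mod_cast this
      _ = (↑(t.erase w0) : Set _).encard := (Set.encard_coe_eq_coe_finsetCard _).symm
      _ ≤ _ := Set.encard_mono hsub
  have h4 := h w0 hw0W
  have : (5 : ℕ∞) ≤ 4 := h5.trans h4
  norm_num at this

private lemma finset_bound (β : ℝ) (hβ : 0 ≤ β) (x : EuclideanSpace ℝ (Fin 2))
    (W : Set (EuclideanSpace ℝ (Fin 2))) (hW : W ⊆ closedBall x (β + 1))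
    (h : ∀ w ∈ W, ((W \ {w}) ∩ closedBall w 1).encard ≤ (4 : ℕ∞))
    (s : Finset (EuclideanSpace ℝ (Fin 2))) (hs : ↑s ⊆ W) :
    (s.card : ℝ) ≤ 20 * (β + 2) ^ 2 := by
  have key : ∀ y, ∑ w ∈ s, (closedBall w (1/2)).indicator (1 : EuclideanSpace ℝ (Fin 2) → ℝ≥0∞) y ≤
      (5 : ℝ≥0∞) * (closedBall x (β+2)).indicator 1 y := by
    intro y
    have hsum : ∑ w ∈ s, (closedBall w (1/2)).indicator (1 : EuclideanSpace ℝ (Fin 2) → ℝ≥0∞) y =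
        ((s.filter (fun w => y ∈ closedBall w (1/2))).card : ℝ≥0∞) := by
      rw [Finset.card_filter]
      push_cast
      refine Finset.sum_congr rfl fun w _ => ?_
      by_cases hy : y ∈ closedBall w (1/2) <;> simp [Set.indicator, hy]
    rw [hsum]
    rcases (s.filter (fun w => y ∈ closedBall w (1/2))).eq_empty_or_nonempty with he | ⟨w, hw⟩
    · rw [he]; simp
    · have hwf := Finset.mem_filter.mp hw
      have hyx : y ∈ closedBall x (β + 2) := by
        have h1 : dist y w ≤ 1/2 := hwf.2
        have h2 : dist w x ≤ β + 1 := hW (hs hwf.1)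
        have := dist_triangle y w x
        rw [mem_closedBall]; linarith
      rw [Set.indicator_of_mem hyx, Pi.one_apply, mul_one]
      exact_mod_cast mult_bound W h s hs y
  have meas : ∀ w : EuclideanSpace ℝ (Fin 2),
      Measurable ((closedBall w (1/2)).indicator (1 : EuclideanSpace ℝ (Fin 2) → ℝ≥0∞)) :=
    fun w => measurable_one.indicator measurableSet_closedBall
  have hint : ∑ w ∈ s, volume (closedBall w (1/2)) ≤
      5 * volume (closedBall x (β + 2)) := by
    calc ∑ w ∈ s, volume (closedBall w (1/2))
        = ∑ w ∈ s, ∫⁻ y, (closedBall w (1/2)).indicator (1 : EuclideanSpace ℝ (Fin 2) → ℝ≥0∞) y := by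
          refine Finset.sum_congr rfl fun w _ => ?_
          rw [lintegral_indicator_one measurableSet_closedBall]
      _ = ∫⁻ y, ∑ w ∈ s, (closedBall w (1/2)).indicator (1 : EuclideanSpace ℝ (Fin 2) → ℝ≥0∞) y :=
          (lintegral_finset_sum s fun w _ => meas w).symm
      _ ≤ ∫⁻ y, (5 : ℝ≥0∞) * (closedBall x (β+2)).indicator 1 y := lintegral_mono key
      _ = 5 * volume (closedBall x (β + 2)) := by
          rw [lintegral_const_mul _ (measurable_one.indicator measurableSet_closedBall),
            lintegral_indicator_one measurableSet_closedBall]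
  have hvol : ∀ (c : EuclideanSpace ℝ (Fin 2)) (r : ℝ),
      volume (closedBall c r) = .ofReal r ^ 2 * .ofReal π := by
    intro c r
    rw [EuclideanSpace.volume_closedBall]
    norm_num [Real.Gamma_two, Real.sq_sqrt Real.pi_pos.le]
  rw [Finset.sum_congr rfl (fun w _ => hvol w (1/2)), Finset.sum_const, hvol x (β + 2)] at hint
  have hπ := Real.pi_pos
  have hlhs : (s.card : ℝ≥0∞) * (ENNReal.ofReal (1/2) ^ 2 * ENNReal.ofReal π) =
      ENNReal.ofReal ((s.card : ℝ) * (π / 4)) := by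
    rw [← ENNReal.ofReal_pow (by norm_num), ← ENNReal.ofReal_mul (by positivity),
      ← ENNReal.ofReal_natCast s.card, ← ENNReal.ofReal_mul (by positivity)]
    norm_num
    congr 1
    rw [← ENNReal.ofReal_mul (by norm_num)]
    congr 1
    ring
  have hrhs : (5 : ℝ≥0∞) * (ENNReal.ofReal (β + 2) ^ 2 * ENNReal.ofReal π) =
      ENNReal.ofReal (5 * ((β + 2) ^ 2 * π)) := by
    rw [← ENNReal.ofReal_pow (by linarith), ← ENNReal.ofReal_mul (by positivity),
      ← ENNReal.ofReal_ofNat 5, ← ENNReal.ofReal_mul (by norm_num)]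
  rw [nsmul_eq_mul, hlhs, hrhs] at hint
  have hreal : (s.card : ℝ) * (π / 4) ≤ 5 * ((β + 2) ^ 2 * π) :=
    (ENNReal.ofReal_le_ofReal_iff (by positivity)).mp hint
  nlinarith [hreal, sq_nonneg (β + 2)]

theorem stmt_3 (β : ℝ) (hβ : 0 ≤ β) (x : EuclideanSpace ℝ (Fin 2))
    (W : Set (EuclideanSpace ℝ (Fin 2))) (hW : W ⊆ closedBall x (β + 1))
    (h : ∀ w ∈ W, ((W \ {w}) ∩ closedBall w 1).encard ≤ (4 : ℕ∞)) :
    W.Finite ∧ (W.ncard : ℝ) ≤ 20 * (β + 2) ^ 2 := by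
  have hb := finset_bound β hβ x W hW h
  have hfin : W.Finite := by
    by_contra hinf
    have hinf' : W.Infinite := hinf
    obtain ⟨t, hts, htc⟩ := hinf'.exists_subset_card_eq (⌈20 * (β + 2) ^ 2⌉₊ + 1)
    have := hb t hts
    rw [htc] at this
    have h2 : (20 * (β + 2) ^ 2 : ℝ) ≤ ⌈20 * (β + 2) ^ 2⌉₊ := Nat.le_ceil _
    push_cast at this
    linarith
  refine ⟨hfin, ?_⟩
  have := hb hfin.toFinset (by simp)
  rwa [Set.ncard_eq_toFinset_card W hfin]
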